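/- Let ψ_f = CNOT_{2→1} · (I⊗H) · diag(1,1,1,e^{iπ/2}) · (|+⟩⊗|+⟩), where |+⟩ = (|0⟩+|1⟩)/√2. Then, in the computational basis (|00⟩,|01⟩,|10⟩,|11⟩), ψ_f = (1/√2)·(1, (1−i)/2, (1+i)/2, 0)ᵀ, and the locally rotated state (I⊗(−Y)) ψ_f equals the EJM state ψ_1 up to a global phase: there exists ω ∈ ℂ with |ω| = 1 such that (I⊗(−Y)) ψ_f = ω ψ_1. -/

import Mathlib

open Matrix Complex Kronecker

noncomputable section

def X2 : Matrix (Fin 2) (Fin 2) ℂ := !![0, 1; 1, 0]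
def Y2 : Matrix (Fin 2) (Fin 2) ℂ := !![0, -Complex.I; Complex.I, 0]
def Z2 : Matrix (Fin 2) (Fin 2) ℂ := !![1, 0; 0, -1]

/-- The tetrahedral Bloch vectors `m₁, m₂, m₃, m₄` (0-indexed). -/
def mtet : Fin 4 → Fin 3 → ℝ := fun i j =>
  (![![1, 1, 1], ![1, -1, -1], ![-1, 1, -1], ![-1, -1, 1]] : Fin 4 → Fin 3 → ℝ) i j /
    Real.sqrt 3

def bTheta (m : Fin 3 → ℝ) : ℝ := Real.arccos (m 2)
def bPhi (m : Fin 3 → ℝ) : ℝ := Complex.arg ((m 0 : ℂ) + (m 1 : ℂ) * Complex.I)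

/-- `|m⟩ = cos(θ/2)|0⟩ + sin(θ/2) e^{iφ} |1⟩`. -/
def ketP (m : Fin 3 → ℝ) : Fin 2 → ℂ :=
  ![(Real.cos (bTheta m / 2) : ℂ),
    (Real.sin (bTheta m / 2) : ℂ) * Complex.exp ((bPhi m : ℂ) * Complex.I)]

/-- `|−m⟩ = sin(θ/2)|0⟩ − cos(θ/2) e^{iφ} |1⟩`. -/
def ketM (m : Fin 3 → ℝ) : Fin 2 → ℂ :=
  ![(Real.sin (bTheta m / 2) : ℂ),
    -((Real.cos (bTheta m / 2) : ℂ)) * Complex.exp ((bPhi m : ℂ) * Complex.I)]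

/-- Tensor product of two qubit vectors. -/
def tp (u w : Fin 2 → ℂ) : Fin 2 × Fin 2 → ℂ := fun p => u p.1 * w p.2

/-- The EJM basis states `ψ_1, …, ψ_4` (0-indexed). -/
def ψEJM (i : Fin 4) : Fin 2 × Fin 2 → ℂ :=
  (((Real.sqrt 3 + 1) / (2 * Real.sqrt 2) : ℝ) : ℂ) • tp (ketP (mtet i)) (ketM (mtet i)) +
    (((Real.sqrt 3 - 1) / (2 * Real.sqrt 2) : ℝ) : ℂ) • tp (ketM (mtet i)) (ketP (mtet i))

/-- Inner product on `ℂ² ⊗ ℂ²` (conjugate-linear in the first argument). -/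
def ip2 (v w : Fin 2 × Fin 2 → ℂ) : ℂ := ∑ p, star (v p) * w p

/-- `m·σ = m_x X + m_y Y + m_z Z`. -/
def mDotSigma (m : Fin 3 → ℝ) : Matrix (Fin 2) (Fin 2) ℂ :=
  (m 0 : ℂ) • X2 + (m 1 : ℂ) • Y2 + (m 2 : ℂ) • Z2

end

noncomputable section

/-- `CNOT_{2→1}`: control qubit 2, target qubit 1 (flips the first factor when the
second is `|1⟩`). -/
def CNOT21 : Matrix (Fin 2 × Fin 2) (Fin 2 × Fin 2) ℂ :=
  fun p q => if p = (q.1 + q.2, q.2) then 1 else 0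

def H2 : Matrix (Fin 2) (Fin 2) ℂ := (((Real.sqrt 2)⁻¹ : ℝ) : ℂ) • !![1, 1; 1, -1]

/-- `|+⟩ = (|0⟩ + |1⟩)/√2`. -/
def ketPlus : Fin 2 → ℂ := fun _ => (((Real.sqrt 2)⁻¹ : ℝ) : ℂ)

/-- `diag(1,1,1,e^{iπ/2})` in the computational basis `|00⟩,|01⟩,|10⟩,|11⟩`. -/
def Dphase : Matrix (Fin 2 × Fin 2) (Fin 2 × Fin 2) ℂ :=
  Matrix.diagonal (fun p => if p = (1, 1) then Complex.exp (Real.pi * Complex.I / 2) else 1)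

/-- The fiducial `ψ_f = CNOT_{2→1} (I⊗H) diag(1,1,1,e^{iπ/2}) (|+⟩⊗|+⟩)`. -/
def ψf : Fin 2 × Fin 2 → ℂ :=
  (CNOT21 * ((1 : Matrix (Fin 2) (Fin 2) ℂ) ⊗ₖ H2) * Dphase).mulVec (tp ketPlus ketPlus)

lemma mtet0 (j : Fin 3) : mtet 0 j = (Real.sqrt 3)⁻¹ := by
  fin_cases j <;> simp [mtet, one_div]

lemma s3_pos : (0:ℝ) < Real.sqrt 3 := by positivity
lemma s2_pos : (0:ℝ) < Real.sqrt 2 := by positivity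
lemma s3_sq : Real.sqrt 3 * Real.sqrt 3 = 3 := Real.mul_self_sqrt (by norm_num)
lemma s2_sq : Real.sqrt 2 * Real.sqrt 2 = 2 := Real.mul_self_sqrt (by norm_num)

lemma inv3_le : (Real.sqrt 3)⁻¹ ≤ 1 := by
  rw [inv_le_one_iff₀]; right; nlinarith [s3_sq, s3_pos]

lemma inv3_nonneg : (0:ℝ) ≤ (Real.sqrt 3)⁻¹ := by positivity

lemma cos_theta : Real.cos (bTheta (mtet 0)) = (Real.sqrt 3)⁻¹ := by
  rw [bTheta, mtet0, Real.cos_arccos (by linarith [inv3_nonneg]) inv3_le]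

lemma csq : Real.cos (bTheta (mtet 0) / 2) ^ 2 = (3 + Real.sqrt 3) / 6 := by
  have h := Real.cos_sq (bTheta (mtet 0) / 2)
  rw [h, show 2 * (bTheta (mtet 0)/2) = bTheta (mtet 0) by ring, cos_theta]
  field_simp
  nlinarith [s3_sq, s3_pos]

lemma ssq : Real.sin (bTheta (mtet 0) / 2) ^ 2 = (3 - Real.sqrt 3) / 6 := by
  have h := Real.sin_sq (bTheta (mtet 0) / 2)
  rw [h, csq]; field_simp; nlinarith [s3_sq, s3_pos]

lemma cs : Real.cos (bTheta (mtet 0) / 2) * Real.sin (bTheta (mtet 0) / 2)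
    = Real.sqrt 2 * Real.sqrt 3 / 6 := by
  have hinv : ((Real.sqrt 3)⁻¹:ℝ)^2 = 1/3 := by rw [inv_pow, sq, s3_sq]; norm_num
  have h2 : Real.sin (bTheta (mtet 0)) = Real.sqrt 2 * Real.sqrt 3 / 3 := by
    rw [bTheta, mtet0, Real.sin_arccos, hinv,
      show (1:ℝ) - 1/3 = 2/3 by norm_num,
      show (2:ℝ)/3 = 2*3/3^2 by norm_num, Real.sqrt_div' (2*3) (by norm_num),
      Real.sqrt_mul (by norm_num) 3,
      Real.sqrt_sq (by norm_num : (0:ℝ) ≤ 3)]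
  have h3 : Real.sin (bTheta (mtet 0)) =
      2 * Real.sin (bTheta (mtet 0) / 2) * Real.cos (bTheta (mtet 0) / 2) := by
    rw [← Real.sin_two_mul]; ring_nf
  rw [h2] at h3; linarith [h3]

lemma s2ne : ((Real.sqrt 2 : ℝ):ℂ) ≠ 0 := Complex.ofReal_ne_zero.mpr (ne_of_gt s2_pos)
lemma s3ne : ((Real.sqrt 3 : ℝ):ℂ) ≠ 0 := Complex.ofReal_ne_zero.mpr (ne_of_gt s3_pos)

lemma expphi : Complex.exp ((bPhi (mtet 0) : ℂ) * Complex.I)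
    = (1 + Complex.I) / (Real.sqrt 2 : ℝ) := by
  have hz : ((mtet 0 0 : ℂ) + (mtet 0 1 : ℂ) * Complex.I)
      = (((Real.sqrt 3)⁻¹ : ℝ):ℂ) * (1 + Complex.I) := by
    rw [mtet0, mtet0]; push_cast; ring
  have habs : ‖((mtet 0 0 : ℂ) + (mtet 0 1 : ℂ) * Complex.I)‖
      = (Real.sqrt 3)⁻¹ * Real.sqrt 2 := by
    rw [hz, norm_mul, Complex.norm_real, Real.norm_of_nonneg inv3_nonneg]
    congr 1
    rw [Complex.norm_def]
    norm_num [Complex.normSq_apply]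
  have key := Complex.norm_mul_exp_arg_mul_I ((mtet 0 0 : ℂ) + (mtet 0 1 : ℂ) * Complex.I)
  rw [habs, hz] at key
  simp only [bPhi]
  rw [hz]
  push_cast at key ⊢
  field_simp at key ⊢
  linear_combination key

lemma psi0 : ψEJM 0 = fun p =>
    (![![1/2, -(1+Complex.I)/2], ![0, -Complex.I/2]] : Fin 2 → Fin 2 → ℂ) p.1 p.2 := by
  have hcast : ((bTheta (mtet 0):ℝ):ℂ)/2 = ((bTheta (mtet 0)/2 : ℝ):ℂ) := by push_cast; ring
  have hc2 : Complex.cos (((bTheta (mtet 0):ℝ):ℂ)/2)^2 = (3 + (Real.sqrt 3:ℝ))/6 := by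
    rw [hcast, ← Complex.ofReal_cos, ← Complex.ofReal_pow, csq]; push_cast; ring
  have hs2 : Complex.sin (((bTheta (mtet 0):ℝ):ℂ)/2)^2 = (3 - (Real.sqrt 3:ℝ))/6 := by
    rw [hcast, ← Complex.ofReal_sin, ← Complex.ofReal_pow, ssq]; push_cast; ring
  have hcs : Complex.cos (((bTheta (mtet 0):ℝ):ℂ)/2) * Complex.sin (((bTheta (mtet 0):ℝ):ℂ)/2)
      = (Real.sqrt 2:ℝ) * (Real.sqrt 3:ℝ) / 6 := by
    rw [hcast, ← Complex.ofReal_cos, ← Complex.ofReal_sin, ← Complex.ofReal_mul, cs]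
    push_cast; ring
  have ht2 : ((Real.sqrt 2:ℝ):ℂ)^2 = 2 := by rw [← Complex.ofReal_pow, sq, s2_sq]; norm_num
  have ht3 : ((Real.sqrt 3:ℝ):ℂ)^2 = 3 := by rw [← Complex.ofReal_pow, sq, s3_sq]; norm_num
  funext p
  have hI : Complex.I^2 = -1 := Complex.I_sq
  set t2 : ℂ := ((Real.sqrt 2:ℝ):ℂ) with ht2d
  set t3 : ℂ := ((Real.sqrt 3:ℝ):ℂ) with ht3d
  fin_cases p
  · simp [ψEJM, tp, ketP, ketM, expphi]
    field_simp [s2ne]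
    linear_combination (2*t3)*hcs + (t2/3)*ht3
  · simp [ψEJM, tp, ketP, ketM, expphi]
    field_simp [s2ne]
    linear_combination (-(1+Complex.I)*(t3+1))*hc2 + ((1+Complex.I)*(t3-1))*hs2
      + (-(1+Complex.I)/3)*ht3 + (1+Complex.I)*ht2
  · simp [ψEJM, tp, ketP, ketM, expphi]
    field_simp [s2ne]
    linear_combination ((t3+1)*(1+Complex.I))*hs2 + (-(t3-1)*(1+Complex.I))*hc2
      + (-(1+Complex.I)/3)*ht3
  · simp [ψEJM, tp, ketP, ketM, expphi]
    field_simp [s2ne]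
    linear_combination (-2*t3*(1+Complex.I)^2)*hcs + (-t2*(1+Complex.I)^2/3)*ht3
      + (Complex.I*t2)*ht2 + (-t2)*hI

lemma part1 : (ψf = fun p => (((Real.sqrt 2)⁻¹ : ℝ) : ℂ) *
      (![![1, (1 - Complex.I) / 2], ![(1 + Complex.I) / 2, 0]] : Fin 2 → Fin 2 → ℂ)
        p.1 p.2) := by
  have hexpI : Complex.exp ((Real.pi:ℂ) * Complex.I / 2) = Complex.I := by
    rw [show (Real.pi : ℂ) * Complex.I / 2 = ((Real.pi/2 : ℝ):ℂ) * Complex.I by push_cast; ring,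
      Complex.exp_mul_I]
    simp [← Complex.ofReal_cos, ← Complex.ofReal_sin, Real.cos_pi_div_two, Real.sin_pi_div_two]
  have h2 : ((Real.sqrt 2 : ℂ))⁻¹ * (Real.sqrt 2 : ℂ)⁻¹ = 2⁻¹ := by
    rw [← mul_inv, ← Complex.ofReal_mul, Real.mul_self_sqrt (by norm_num)]
    norm_num
  funext p
  fin_cases p
  · simp [ψf, CNOT21, H2, Dphase, ketPlus, tp, Matrix.mulVec, Matrix.mul_apply, dotProduct,
      Fintype.sum_prod_type, Fin.sum_univ_two, Matrix.one_apply, Matrix.diagonal, hexpI,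
      Prod.ext_iff]
    ring_nf
    linear_combination (2*((Real.sqrt 2:ℝ):ℂ)⁻¹) * h2
  · simp [ψf, CNOT21, H2, Dphase, ketPlus, tp, Matrix.mulVec, Matrix.mul_apply, dotProduct,
      Fintype.sum_prod_type, Fin.sum_univ_two, Matrix.one_apply, Matrix.diagonal, hexpI,
      Prod.ext_iff]
    ring_nf
    linear_combination (((Real.sqrt 2:ℝ):ℂ)⁻¹ - ((Real.sqrt 2:ℝ):ℂ)⁻¹*Complex.I) * h2
  · simp [ψf, CNOT21, H2, Dphase, ketPlus, tp, Matrix.mulVec, Matrix.mul_apply, dotProduct,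
      Fintype.sum_prod_type, Fin.sum_univ_two, Matrix.one_apply, Matrix.diagonal, hexpI,
      Prod.ext_iff]
    ring_nf
    linear_combination (((Real.sqrt 2:ℝ):ℂ)⁻¹ + ((Real.sqrt 2:ℝ):ℂ)⁻¹*Complex.I) * h2
  · simp [ψf, CNOT21, H2, Dphase, ketPlus, tp, Matrix.mulVec, Matrix.mul_apply, dotProduct,
      Fintype.sum_prod_type, Fin.sum_univ_two, Matrix.one_apply, Matrix.diagonal, hexpI,
      Prod.ext_iff]

/-- `ψ_f = (1/√2)(1, (1−i)/2, (1+i)/2, 0)ᵀ` in the computational basis,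
and `(I ⊗ (−Y)) ψ_f` equals the EJM state `ψ_1` up to a global phase. -/
theorem EJM_fiducial_circuit :
    (ψf = fun p => (((Real.sqrt 2)⁻¹ : ℝ) : ℂ) *
      (![![1, (1 - Complex.I) / 2], ![(1 + Complex.I) / 2, 0]] : Fin 2 → Fin 2 → ℂ)
        p.1 p.2) ∧
    ∃ ω : ℂ, ‖ω‖ = 1 ∧
      ((1 : Matrix (Fin 2) (Fin 2) ℂ) ⊗ₖ (-Y2)).mulVec ψf = ω • ψEJM 0 := by
  refine ⟨part1, (1 + Complex.I) / ((Real.sqrt 2:ℝ):ℂ), ?_, ?_⟩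
  · rw [norm_div, Complex.norm_real, Real.norm_of_nonneg (le_of_lt s2_pos)]
    rw [Complex.norm_def]
    norm_num [Complex.normSq_apply]
  · rw [part1, psi0]
    have hI : Complex.I^2 = -1 := Complex.I_sq
    funext p
    fin_cases p
    · simp [Matrix.mulVec, Matrix.one_apply, Y2, dotProduct, Fintype.sum_prod_type,
        Fin.sum_univ_two, Matrix.kroneckerMap_apply]
      field_simp [s2ne]
      linear_combination -hI
    · simp [Matrix.mulVec, Matrix.one_apply, Y2, dotProduct, Fintype.sum_prod_type,
        Fin.sum_univ_two, Matrix.kroneckerMap_apply]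
      field_simp [s2ne]
      linear_combination hI
    · simp [Matrix.mulVec, Matrix.one_apply, Y2, dotProduct, Fintype.sum_prod_type,
        Fin.sum_univ_two, Matrix.kroneckerMap_apply]
    · simp [Matrix.mulVec, Matrix.one_apply, Y2, dotProduct, Fintype.sum_prod_type,
        Fin.sum_univ_two, Matrix.kroneckerMap_apply]
      field_simp [s2ne]

end
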